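/- Let H be a distributive Ω-expanded group and define τ(S) = ⟨S ∪ ⋃_{ω∈Ω} ω(S^{ar ω})⟩ for subsets S ⊆ H, where ⟨·⟩ denotes the additive subgroup generated. Then τ(S) = τ(⟨S⟩) for every subset S ⊆ H. -/

import Mathlib

/-- Distributivity of the extra operations of an Ω-expanded group over `+`. -/
def IsDistribExpansion {Ω : Type*} (ar : Ω → ℕ) {H : Type*} [AddGroup H]
    (op : ∀ ω : Ω, (Fin (ar ω) → H) → H) : Prop :=
  ∀ (ω : Ω) (i : Fin (ar ω)) (h : Fin (ar ω) → H) (a b : H),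
    op ω (Function.update h i (a + b)) =
      op ω (Function.update h i a) + op ω (Function.update h i b)

/-- `τ(S) = ⟨S ∪ ⋃_{ω∈Ω} ω(S^{ar ω})⟩`, the additive subgroup generated. -/
def tauSet {Ω : Type*} (ar : Ω → ℕ) {H : Type*} [AddGroup H]
    (op : ∀ ω : Ω, (Fin (ar ω) → H) → H) (S : Set H) : Set H :=
  ↑(AddSubgroup.closure (S ∪ ⋃ ω : Ω, op ω '' {h | ∀ i, h i ∈ S}))

lemma expZero {Ω : Type*} {ar : Ω → ℕ} {H : Type*} [AddGroup H]
    {op : ∀ ω : Ω, (Fin (ar ω) → H) → H} (hdis : IsDistribExpansion ar op)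
    (ω : Ω) (i : Fin (ar ω)) (h : Fin (ar ω) → H) :
    op ω (Function.update h i 0) = 0 := by
  have := hdis ω i h 0 0
  rw [add_zero] at this
  exact left_eq_add.mp this

lemma expNeg {Ω : Type*} {ar : Ω → ℕ} {H : Type*} [AddGroup H]
    {op : ∀ ω : Ω, (Fin (ar ω) → H) → H} (hdis : IsDistribExpansion ar op)
    (ω : Ω) (i : Fin (ar ω)) (h : Fin (ar ω) → H) (a : H) :
    op ω (Function.update h i (-a)) = - op ω (Function.update h i a) := by
  have := hdis ω i h a (-a)
  rw [add_neg_cancel, expZero hdis] at this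
  exact (neg_eq_of_add_eq_zero_right this.symm).symm

lemma key {Ω : Type*} {ar : Ω → ℕ} {H : Type*} [AddGroup H]
    {op : ∀ ω : Ω, (Fin (ar ω) → H) → H} (hdis : IsDistribExpansion ar op)
    (S : Set H) (ω : Ω) (t : Finset (Fin (ar ω))) :
    ∀ (h : Fin (ar ω) → H), (∀ i ∈ t, h i ∈ AddSubgroup.closure S) →
      (∀ i ∉ t, h i ∈ S) →
      op ω h ∈ AddSubgroup.closure (S ∪ ⋃ ω : Ω, op ω '' {h | ∀ i, h i ∈ S}) := by
  classical
  induction t using Finset.induction_on with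
  | empty =>
    intro h _ hS
    exact AddSubgroup.subset_closure (Or.inr (Set.mem_iUnion.2 ⟨ω, ⟨h, fun i => hS i (by simp), rfl⟩⟩))
  | @insert j t hj ih =>
    intro h hcl hS
    have hjmem : h j ∈ AddSubgroup.closure S := hcl j (Finset.mem_insert_self j t)
    have main : ∀ x ∈ AddSubgroup.closure S,
        op ω (Function.update h j x) ∈
          AddSubgroup.closure (S ∪ ⋃ ω : Ω, op ω '' {h | ∀ i, h i ∈ S}) := by
      intro x hx
      induction hx using AddSubgroup.closure_induction with
      | mem y hy =>
        apply ih
        · intro i hi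
          rcases eq_or_ne i j with rfl | hne
          · exact absurd hi hj
          · rw [Function.update_of_ne hne]
            exact hcl i (Finset.mem_insert_of_mem hi)
        · intro i hi
          rcases eq_or_ne i j with rfl | hne
          · simpa using hy
          · rw [Function.update_of_ne hne]
            exact hS i (by simp [hne, hi])
      | zero =>
        rw [expZero hdis]
        exact zero_mem _
      | add a b _ _ ha hb =>
        rw [hdis ω j h a b]
        exact add_mem ha hb
      | neg a _ ha =>
        rw [expNeg hdis]
        exact neg_mem ha
    have := main (h j) hjmem
    rwa [Function.update_eq_self] at this

/-- In a distributive Ω-expanded group, `τ(S) = τ(⟨S⟩)` for every `S ⊆ H`. -/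
theorem stmt_4 {Ω : Type*} (ar : Ω → ℕ) {H : Type*} [AddGroup H]
    (op : ∀ ω : Ω, (Fin (ar ω) → H) → H) (hdis : IsDistribExpansion ar op)
    (S : Set H) :
    tauSet ar op S = tauSet ar op ↑(AddSubgroup.closure S) := by
  suffices hq : AddSubgroup.closure (S ∪ ⋃ ω : Ω, op ω '' {h | ∀ i, h i ∈ S}) =
      AddSubgroup.closure ((AddSubgroup.closure S : Set H) ∪
        ⋃ ω : Ω, op ω '' {h | ∀ i, h i ∈ (AddSubgroup.closure S : Set H)}) by
    unfold tauSet; rw [hq]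
  apply le_antisymm
  · apply AddSubgroup.closure_mono
    apply Set.union_subset_union AddSubgroup.subset_closure
    exact Set.iUnion_mono fun ω => Set.image_mono fun h hh i => AddSubgroup.subset_closure (hh i)
  · rw [AddSubgroup.closure_le]
    rintro x (hx | hx)
    · exact AddSubgroup.closure_mono Set.subset_union_left hx
    · rcases Set.mem_iUnion.1 hx with ⟨ω, h, hh, rfl⟩
      exact key hdis S ω Finset.univ h (fun i _ => hh i) (fun i hi => absurd (Finset.mem_univ i) hi)
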